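/- Let f be convex differentiable and let x_R, λ_A, λ_E ≥ 0 satisfy the KKT conditions of min{ f(x) : A x = b, E x ≤ f₀ } with value z_R. Let ψ : ℝᵐ → ℝ≥0 be a level-bounded augmenting function (ψ(0) = 0, ψ(u) > 0 for u ≠ 0, sublevel sets { u : ψ(u) ≤ δ } bounded with diameter → 0 as δ → 0). Then for any ρ > 0, every x with E x ≤ f₀ and f(x) + λ_Aᵀ(b − A x) + ρψ(b − A x) ≤ z_IP satisfies ψ(b − A x) ≤ (z_IP − z_R)/ρ; consequently ‖b − A x‖_∞ ≤ κ_ρ for some finite κ_ρ with κ_ρ → 0 as ρ → ∞. -/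

import Mathlib

open scoped RealInnerProductSpace Matrix

/-- Reinterpret a plain vector as an element of Euclidean space. -/
def toEuc {m : ℕ} (v : Fin m → ℝ) : EuclideanSpace ℝ (Fin m) := WithLp.toLp 2 v


lemma inner_toEuc {m : ℕ} (v : Fin m → ℝ) (w : EuclideanSpace ℝ (Fin m)) :
    ⟪toEuc v, w⟫ = v ⬝ᵥ w := by
  simp [toEuc, PiLp.inner_apply, RCLike.inner_apply, dotProduct, mul_comm]

lemma inner_toEuc' {m : ℕ} (v : EuclideanSpace ℝ (Fin m)) (w : Fin m → ℝ) :
    ⟪v, toEuc w⟫ = (fun i => v i) ⬝ᵥ w := by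
  simp [toEuc, PiLp.inner_apply, RCLike.inner_apply, dotProduct, mul_comm]

lemma transp_dot {m n : ℕ} (M : Matrix (Fin m) (Fin n) ℝ) (v : Fin m → ℝ) (u : Fin n → ℝ) :
    (M.transpose.mulVec v) ⬝ᵥ u = v ⬝ᵥ (M.mulVec u) := by
  rw [Matrix.dotProduct_mulVec, Matrix.mulVec_transpose]

/-- Lemma 10 of the paper, first part.
With KKT multipliers of the continuous relaxation and a level-bounded augmenting
function `ψ`, every `x` in the augmented-Lagrangian sublevel set satisfies
`ψ(b − A x) ≤ (z_IP − z_R)/ρ`; consequently there is a finite bound `κ ρ` on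
`‖b − A x‖` with `κ ρ → 0` as `ρ → ∞`. -/
theorem augmented_sublevel_violation_bound
    {n m p : ℕ}
    (f : EuclideanSpace ℝ (Fin n) → ℝ)
    (g : EuclideanSpace ℝ (Fin n) → EuclideanSpace ℝ (Fin n))
    (hconv : ∀ x y : EuclideanSpace ℝ (Fin n), f x + ⟪g x, y - x⟫ ≤ f y)
    (A : Matrix (Fin m) (Fin n) ℝ) (E : Matrix (Fin p) (Fin n) ℝ)
    (b : EuclideanSpace ℝ (Fin m)) (f₀ : Fin p → ℝ)
    (xR : EuclideanSpace ℝ (Fin n)) (zR zIP : ℝ)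
    (lamA : EuclideanSpace ℝ (Fin m)) (lamE : Fin p → ℝ)
    -- KKT conditions of the continuous relaxation at `x_R`
    (hfeasA : toEuc (A.mulVec xR) = b)
    (hfeasE : ∀ i, E.mulVec xR i ≤ f₀ i)
    (hval : f xR = zR)
    (hstat : g xR = toEuc (A.transpose.mulVec lamA) - toEuc (E.transpose.mulVec lamE))
    (hcompE : lamE ⬝ᵥ (f₀ - E.mulVec xR) = 0)
    (hcompA : lamA ⬝ᵥ (toEuc (A.mulVec xR) - b) = 0)
    (hlamE : ∀ i, 0 ≤ lamE i)
    (hzIP : zR ≤ zIP)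
    -- `ψ` is a level-bounded augmenting function
    (ψ : EuclideanSpace ℝ (Fin m) → ℝ)
    (hψ0 : ψ 0 = 0) (hψpos : ∀ u : EuclideanSpace ℝ (Fin m), u ≠ 0 → 0 < ψ u)
    (hψnonneg : ∀ u, 0 ≤ ψ u)
    (hψbdd : ∀ δ : ℝ, 0 < δ → Bornology.IsBounded {u : EuclideanSpace ℝ (Fin m) | ψ u ≤ δ})
    (hψdiam : ∀ ε : ℝ, 0 < ε → ∃ δ : ℝ, 0 < δ ∧
      ∀ u : EuclideanSpace ℝ (Fin m), ψ u ≤ δ → ‖u‖ ≤ ε) :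
    (∀ ρ : ℝ, 0 < ρ → ∀ x : EuclideanSpace ℝ (Fin n),
      (∀ i, E.mulVec x i ≤ f₀ i) →
      f x + ⟪lamA, b - toEuc (A.mulVec x)⟫ + ρ * ψ (b - toEuc (A.mulVec x)) ≤ zIP →
      ψ (b - toEuc (A.mulVec x)) ≤ (zIP - zR) / ρ) ∧
    (∃ κ : ℝ → ℝ, Filter.Tendsto κ Filter.atTop (nhds 0) ∧
      ∀ ρ : ℝ, 0 < ρ → ∀ x : EuclideanSpace ℝ (Fin n),
        (∀ i, E.mulVec x i ≤ f₀ i) →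
        f x + ⟪lamA, b - toEuc (A.mulVec x)⟫ + ρ * ψ (b - toEuc (A.mulVec x)) ≤ zIP →
        ‖b - toEuc (A.mulVec x)‖ ≤ κ ρ) := by
  -- key lower bound from KKT + convexity
  have key : ∀ x : EuclideanSpace ℝ (Fin n), (∀ i, E.mulVec x i ≤ f₀ i) →
      zR ≤ f x + ⟪lamA, b - toEuc (A.mulVec x)⟫ := by
    intro x hx
    have h1 := hconv xR x
    rw [hval, hstat] at h1
    rw [← hfeasA]
    have hE : lamE ⬝ᵥ (E.mulVec x - E.mulVec xR) ≤ 0 := by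
      have h2 : lamE ⬝ᵥ (E.mulVec x - f₀) ≤ 0 := by
        apply Finset.sum_nonpos
        intro i _
        exact mul_nonpos_of_nonneg_of_nonpos (hlamE i)
          (by simp only [Pi.sub_apply, sub_nonpos]; exact hx i)
      have h3 : lamE ⬝ᵥ (E.mulVec x - E.mulVec xR)
          = lamE ⬝ᵥ (E.mulVec x - f₀) + lamE ⬝ᵥ (f₀ - E.mulVec xR) := by
        rw [← dotProduct_add, sub_add_sub_cancel]
      rw [h3, hcompE, add_zero]; exact h2
    have eq1 : ⟪toEuc (A.transpose.mulVec lamA) - toEuc (E.transpose.mulVec lamE), x - xR⟫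
        = lamA ⬝ᵥ (A.mulVec x - A.mulVec xR) - lamE ⬝ᵥ (E.mulVec x - E.mulVec xR) := by
      rw [inner_sub_left, inner_toEuc, inner_toEuc, transp_dot, transp_dot]
      rw [show ((x - xR : EuclideanSpace ℝ (Fin n)) : Fin n → ℝ)
          = (x : Fin n → ℝ) - (xR : Fin n → ℝ) from rfl]
      rw [Matrix.mulVec_sub, Matrix.mulVec_sub, dotProduct_sub, dotProduct_sub]
    have eq2 : ⟪lamA, toEuc (A.mulVec xR) - toEuc (A.mulVec x)⟫
        = lamA ⬝ᵥ (A.mulVec xR) - lamA ⬝ᵥ (A.mulVec x) := by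
      rw [inner_sub_right, inner_toEuc', inner_toEuc']
    rw [eq1] at h1
    rw [eq2]
    rw [dotProduct_sub] at h1
    linarith
  have part1 : ∀ ρ : ℝ, 0 < ρ → ∀ x : EuclideanSpace ℝ (Fin n),
      (∀ i, E.mulVec x i ≤ f₀ i) →
      f x + ⟪lamA, b - toEuc (A.mulVec x)⟫ + ρ * ψ (b - toEuc (A.mulVec x)) ≤ zIP →
      ψ (b - toEuc (A.mulVec x)) ≤ (zIP - zR) / ρ := by
    intro ρ hρ x hx hle
    have hk := key x hx
    rw [le_div_iff₀ hρ]
    nlinarith [hk, hle]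
  refine ⟨part1, ?_⟩
  -- the bound κ
  set C := zIP - zR with hC
  have hC0 : 0 ≤ C := by simp [hC]; linarith
  set S : ℝ → Set (EuclideanSpace ℝ (Fin m)) := fun ρ => {u | ψ u ≤ C / ρ} with hS
  set κ : ℝ → ℝ := fun ρ => sSup ((fun u => ‖u‖) '' S ρ) with hκ
  have hbdd : ∀ ρ : ℝ, BddAbove ((fun u => ‖u‖) '' S ρ) := by
    intro ρ
    have hsub : S ρ ⊆ {u | ψ u ≤ max (C / ρ) 1} := fun u hu => le_trans (Set.mem_setOf_eq ▸ hu) (le_max_left _ _)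
    have hb : Bornology.IsBounded (S ρ) :=
      (hψbdd (max (C / ρ) 1) (lt_of_lt_of_le one_pos (le_max_right _ _))).subset hsub
    obtain ⟨R, hR⟩ := hb.exists_norm_le
    exact ⟨R, by rintro r ⟨u, hu, rfl⟩; exact hR u hu⟩
  have hmem0 : ∀ ρ : ℝ, 0 < ρ → (0 : ℝ) ∈ (fun u => ‖u‖) '' S ρ := by
    intro ρ hρ
    exact ⟨0, by simp [hS, hψ0]; positivity, by simp⟩
  have hκ0 : ∀ ρ : ℝ, 0 < ρ → 0 ≤ κ ρ := fun ρ hρ => le_csSup (hbdd ρ) (hmem0 ρ hρ)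
  refine ⟨κ, ?_, ?_⟩
  · -- tendsto
    rw [Metric.tendsto_atTop]
    intro ε hε
    obtain ⟨δ, hδ, hδε⟩ := hψdiam (ε / 2) (by linarith)
    refine ⟨max 1 (C / δ + 1), fun ρ hρ => ?_⟩
    have hρ1 : (1 : ℝ) ≤ ρ := le_trans (le_max_left _ _) hρ
    have hρpos : 0 < ρ := lt_of_lt_of_le one_pos hρ1
    have hCδ : C / ρ ≤ δ := by
      rw [div_le_iff₀ hρpos]
      have h1 : C / δ + 1 ≤ ρ := le_trans (le_max_right _ _) hρ
      have h2 : C / δ < ρ := by linarith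
      calc C = (C / δ) * δ := by field_simp
        _ ≤ δ * ρ := by nlinarith
    have hle : κ ρ ≤ ε / 2 := by
      apply csSup_le ⟨0, hmem0 ρ hρpos⟩
      rintro r ⟨u, hu, rfl⟩
      exact hδε u (le_trans hu hCδ)
    rw [Real.dist_eq, sub_zero, abs_of_nonneg (hκ0 ρ hρpos)]
    linarith
  · intro ρ hρ x hx hle
    exact le_csSup (hbdd ρ) ⟨b - toEuc (A.mulVec x), part1 ρ hρ x hx hle, rfl⟩
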